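/- Let (M, W, P) be a two-sided matching market with strict preferences and let W₁ ⊆ W. Fix a side σ ∈ {men, women}, let μ be the σ-optimal stable matching on (M, W, P) and μ₂ the σ-optimal stable matching on the restricted market (M, W₁, P|_(M,W₁)). Then μ₂(m) ≤_m μ(m) for every m ∈ M and μ₂(w) ≥_w μ(w) for every w ∈ W₁. -/

import Mathlib

namespace Stmt2

/-- Strict preferences over partners in `W` plus staying single (`none`), encoded by a
rank function injective on the relevant alternatives; higher rank = more preferred. -/
def StrictPref {β : Type*} (pref : Option β → ℕ) (W : Finset β) : Prop :=
  Set.InjOn pref (insert none (Option.some '' (W : Set β)))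

/-- A (one-to-one) matching on the two-sided market with men `M` and women `W`. -/
structure Matching {α β : Type*} (M : Finset α) (W : Finset β) where
  mu : α → Option β
  nu : β → Option α
  consistent : ∀ m w, mu m = some w ↔ nu w = some m
  suppM : ∀ m, m ∉ M → mu m = none
  suppW : ∀ w, w ∉ W → nu w = none

variable {α β : Type*} (M : Finset α) (W : Finset β)
  (prefM : α → Option β → ℕ) (prefW : β → Option α → ℕ)

def IndRational (μ : Matching M W) : Prop :=
  (∀ m ∈ M, ∀ w, μ.mu m = some w → prefM m none < prefM m (some w)) ∧
  (∀ w ∈ W, ∀ m, μ.nu w = some m → prefW w none < prefW w (some m))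

def Blocks (μ : Matching M W) (m : α) (w : β) : Prop :=
  m ∈ M ∧ w ∈ W ∧ prefM m (μ.mu m) < prefM m (some w) ∧
    prefW w (μ.nu w) < prefW w (some m)

def Stable (μ : Matching M W) : Prop :=
  IndRational M W prefM prefW μ ∧ ∀ m w, ¬ Blocks M W prefM prefW μ m w

/-- Man-optimal stable matching (the output of Gale–Shapley with men proposing). -/
def ManOpt (μ : Matching M W) : Prop :=
  Stable M W prefM prefW μ ∧
    ∀ lam : Matching M W, Stable M W prefM prefW lam →
      ∀ m ∈ M, prefM m (lam.mu m) ≤ prefM m (μ.mu m)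

/-- Woman-optimal stable matching (the output of Gale–Shapley with women proposing). -/
def WomanOpt (μ : Matching M W) : Prop :=
  Stable M W prefM prefW μ ∧
    ∀ lam : Matching M W, Stable M W prefM prefW lam →
      ∀ w ∈ W, prefW w (lam.nu w) ≤ prefW w (μ.nu w)

section AuxProof

variable {α β : Type*} {MM : Finset α} {WW : Finset β}

lemma mu_mem_left {μ : Matching MM WW} {m : α} {w : β} (h : μ.mu m = some w) : m ∈ MM := by
  by_contra hm
  rw [μ.suppM m hm] at h
  exact nomatch h

lemma mu_mem_right {μ : Matching MM WW} {m : α} {w : β} (h : μ.mu m = some w) : w ∈ WW := by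
  by_contra hw
  have h2 := (μ.consistent m w).mp h
  rw [μ.suppW w hw] at h2
  exact nomatch h2

lemma nu_mem_left {μ : Matching MM WW} {m : α} {w : β} (h : μ.nu w = some m) : m ∈ MM :=
  mu_mem_left ((μ.consistent m w).mpr h)

lemma mu_inj {μ : Matching MM WW} {m m' : α} {w : β} (h : μ.mu m = some w)
    (h' : μ.mu m' = some w) : m = m' := by
  have h1 := (μ.consistent m w).mp h
  have h2 := (μ.consistent m' w).mp h'
  rw [h1] at h2
  exact Option.some.inj h2

lemma nu_eq_none_iff {μ : Matching MM WW} {w : β} : μ.nu w = none ↔ ∀ m, μ.mu m ≠ some w := by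
  constructor
  · intro h m hm
    rw [(μ.consistent m w).mp hm] at h
    exact nomatch h
  · intro h
    cases hc : μ.nu w with
    | none => rfl
    | some m => exact absurd ((μ.consistent m w).mpr hc) (h m)

open Classical in
/-- Build a matching from the men's side function. -/
noncomputable def Matching.mk' (MM : Finset α) (WW : Finset β) (f : α → Option β)
    (hsupp : ∀ m ∉ MM, f m = none)
    (hrange : ∀ {m w}, f m = some w → w ∈ WW)
    (hinj : ∀ {m m' w}, f m = some w → f m' = some w → m = m') : Matching MM WW where
  mu := f
  nu := fun w => if h : ∃ m, f m = some w then some h.choose else none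
  consistent := by
    intro m w
    constructor
    · intro hm
      have he : ∃ m, f m = some w := ⟨m, hm⟩
      rw [dif_pos he]
      exact congrArg some (hinj he.choose_spec hm)
    · intro hn
      by_cases he : ∃ m, f m = some w
      · rw [dif_pos he] at hn
        have hs := he.choose_spec
        rwa [Option.some.inj hn] at hs
      · rw [dif_neg he] at hn
        exact nomatch hn
  suppM := fun m hm => hsupp m hm
  suppW := by
    intro w hw
    rw [dif_neg]
    rintro ⟨m, hm⟩
    exact hw (hrange hm)

@[simp] lemma Matching.mk'_mu (MM : Finset α) (WW : Finset β) (f : α → Option β)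
    (h1 : ∀ m ∉ MM, f m = none) (h2 : ∀ {m w}, f m = some w → w ∈ WW)
    (h3 : ∀ {m m' w}, f m = some w → f m' = some w → m = m') :
    (Matching.mk' MM WW f h1 h2 h3).mu = f := rfl

lemma mem_insert_some {WW : Finset β} {w : β} (hw : w ∈ WW) :
    (some w) ∈ insert none (Option.some '' (WW : Set β)) :=
  Set.mem_insert_iff.mpr (Or.inr ⟨w, hw, rfl⟩)

lemma opt_mem_insert {WW : Finset β} {x : Option β}
    (h : ∀ w, x = some w → w ∈ WW) : x ∈ insert none (Option.some '' (WW : Set β)) := by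
  cases hx : x with
  | none => exact Set.mem_insert _ _
  | some w => exact mem_insert_some (h w hx)

lemma StrictPref.mono {pref : Option β → ℕ} {WW WW1 : Finset β} (h : StrictPref pref WW)
    (hsub : WW1 ⊆ WW) : StrictPref pref WW1 :=
  Set.InjOn.mono (Set.insert_subset_insert (Set.image_mono (Finset.coe_subset.mpr hsub))) h



section MarketAux

variable {MM : Finset α} {WW : Finset β} {pM : α → Option β → ℕ} {pW : β → Option α → ℕ}

lemma none_le_mu {μ : Matching MM WW} (hμ : Stable MM WW pM pW μ) (m : α) :
    pM m none ≤ pM m (μ.mu m) := by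
  cases h : μ.mu m with
  | none => exact le_refl _
  | some w => exact (hμ.1.1 m (mu_mem_left h) w h).le

lemma none_le_nu {μ : Matching MM WW} (hμ : Stable MM WW pM pW μ) (w : β) :
    pW w none ≤ pW w (μ.nu w) := by
  cases h : μ.nu w with
  | none => exact le_refl _
  | some m =>
      have hw : w ∈ WW := by
        by_contra hw
        rw [μ.suppW w hw] at h
        exact nomatch h
      exact (hμ.1.2 w hw m h).le

/-- If a man strictly prefers `w` to his partner, then `w` strictly prefers her partner. -/
lemma block_strictW {μ : Matching MM WW} (hμ : Stable MM WW pM pW μ) {m : α} {w : β}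
    (hstrict : StrictPref (pW w) MM) (hm : m ∈ MM) (hw : w ∈ WW)
    (h : pM m (μ.mu m) < pM m (some w)) :
    pW w (some m) < pW w (μ.nu w) := by
  have hnb := hμ.2 m w
  have hle : pW w (some m) ≤ pW w (μ.nu w) := by
    by_contra hlt
    exact hnb ⟨hm, hw, h, lt_of_not_ge hlt⟩
  rcases lt_or_eq_of_le hle with hlt | heq
  · exact hlt
  · exfalso
    have hmem1 : (some m : Option α) ∈ insert none (Option.some '' (MM : Set α)) :=
      mem_insert_some hm
    have hmem2 : μ.nu w ∈ insert none (Option.some '' (MM : Set α)) :=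
      opt_mem_insert (fun m' hm' => nu_mem_left hm')
    have heq2 : μ.nu w = some m := (hstrict hmem1 hmem2 heq).symm
    have := (μ.consistent m w).mpr heq2
    rw [this] at h
    exact lt_irrefl _ h

/-- If a woman strictly prefers `m` to her partner, then `m` strictly prefers his partner. -/
lemma block_strictM {μ : Matching MM WW} (hμ : Stable MM WW pM pW μ) {m : α} {w : β}
    (hstrict : StrictPref (pM m) WW) (hm : m ∈ MM) (hw : w ∈ WW)
    (h : pW w (μ.nu w) < pW w (some m)) :
    pM m (some w) < pM m (μ.mu m) := by
  have hnb := hμ.2 m w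
  have hle : pM m (some w) ≤ pM m (μ.mu m) := by
    by_contra hlt
    exact hnb ⟨hm, hw, lt_of_not_ge hlt, h⟩
  rcases lt_or_eq_of_le hle with hlt | heq
  · exact hlt
  · exfalso
    have hmem1 : (some w : Option β) ∈ insert none (Option.some '' (WW : Set β)) :=
      mem_insert_some hw
    have hmem2 : μ.mu m ∈ insert none (Option.some '' (WW : Set β)) :=
      opt_mem_insert (fun w' hw' => mu_mem_right hw')
    have heq2 : μ.mu m = some w := (hstrict hmem1 hmem2 heq).symm
    have := (μ.consistent m w).mp heq2
    rw [this] at h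
    exact lt_irrefl _ h


end MarketAux

section TwoMarkets

variable {MM : Finset α} {WW WW1 : Finset β}
  {pM : α → Option β → ℕ} {pW : β → Option α → ℕ}
  {μ : Matching MM WW} {ν : Matching MM WW1}

/-- L1: a man strictly preferring the small market is matched there, to a woman
strictly preferring the big market. -/
lemma L1 (hW : ∀ w ∈ WW, StrictPref (pW w) MM) (hWW1 : WW1 ⊆ WW)
    (hμ : Stable MM WW pM pW μ) (hν : Stable MM WW1 pM pW ν)
    {m : α} (h : pM m (μ.mu m) < pM m (ν.mu m)) :
    ∃ w, ν.mu m = some w ∧ w ∈ WW1 ∧ pW w (ν.nu w) < pW w (μ.nu w) := by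
  cases hc : ν.mu m with
  | none =>
      rw [hc] at h
      exact absurd (h.trans_le (none_le_mu hμ m)) (lt_irrefl _)
  | some w =>
      have hm : m ∈ MM := mu_mem_left hc
      have hw1 : w ∈ WW1 := mu_mem_right hc
      have hw : w ∈ WW := hWW1 hw1
      rw [hc] at h
      have hs := block_strictW hμ (hW w hw) hm hw h
      have hn : ν.nu w = some m := (ν.consistent m w).mp hc
      rw [← hn] at hs
      exact ⟨w, rfl, hw1, hs⟩

/-- L2: a woman in `WW1` strictly preferring the big market is matched there, to a man
strictly preferring the small market. -/
lemma L2 (hM : ∀ m ∈ MM, StrictPref (pM m) WW) (hWW1 : WW1 ⊆ WW)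
    (hμ : Stable MM WW pM pW μ) (hν : Stable MM WW1 pM pW ν)
    {w : β} (hw1 : w ∈ WW1) (h : pW w (ν.nu w) < pW w (μ.nu w)) :
    ∃ m, μ.nu w = some m ∧ pM m (μ.mu m) < pM m (ν.mu m) := by
  cases hc : μ.nu w with
  | none =>
      rw [hc] at h
      exact absurd (h.trans_le (none_le_nu hν w)) (lt_irrefl _)
  | some m =>
      have hm : m ∈ MM := nu_mem_left hc
      rw [hc] at h
      have hstrict : StrictPref (pM m) WW1 := (hM m hm).mono hWW1
      have hs := block_strictM hν hstrict hm hw1 h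
      have hmu : μ.mu m = some w := (μ.consistent m w).mpr hc
      rw [← hmu] at hs
      exact ⟨m, rfl, hs⟩

/-- Counting: the partner maps between the sets of "improvers" are bijections. -/
lemma surj_ab (hM : ∀ m ∈ MM, StrictPref (pM m) WW) (hW : ∀ w ∈ WW, StrictPref (pW w) MM)
    (hWW1 : WW1 ⊆ WW) (hμ : Stable MM WW pM pW μ) (hν : Stable MM WW1 pM pW ν) :
    (∀ m, pM m (μ.mu m) < pM m (ν.mu m) →
      ∃ w, μ.mu m = some w ∧ w ∈ WW1 ∧ pW w (ν.nu w) < pW w (μ.nu w)) ∧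
    (∀ w ∈ WW1, pW w (ν.nu w) < pW w (μ.nu w) →
      ∃ m, ν.nu w = some m ∧ pM m (μ.mu m) < pM m (ν.mu m)) := by
  classical
  set T : Finset α := MM.filter (fun m => pM m (μ.mu m) < pM m (ν.mu m)) with hT
  set S : Finset β := WW1.filter (fun w => pW w (ν.nu w) < pW w (μ.nu w)) with hS
  have hmemT : ∀ {m}, m ∈ T ↔ m ∈ MM ∧ pM m (μ.mu m) < pM m (ν.mu m) := by
    intro m; simp [hT]
  have hmemS : ∀ {w}, w ∈ S ↔ w ∈ WW1 ∧ pW w (ν.nu w) < pW w (μ.nu w) := by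
    intro w; simp [hS]
  -- main counting claim, given default elements
  have main : ∀ (m₀ : α) (w₀ : β),
      (T.image (fun x => (ν.mu x).getD w₀) = S ∧ S.image (fun y => (μ.nu y).getD m₀) = T) ∨
      ¬ (T.Nonempty) := by
    intro m₀ w₀
    by_cases hTne : T.Nonempty
    · left
      set f : α → β := fun x => (ν.mu x).getD w₀ with hf
      set g : β → α := fun y => (μ.nu y).getD m₀ with hg
      have hfmap : ∀ x ∈ T, f x ∈ S := by
        intro x hx
        obtain ⟨hxM, hxP⟩ := hmemT.mp hx
        obtain ⟨w, hw, hw1, hwQ⟩ := L1 hW hWW1 hμ hν hxP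
        have : f x = w := by rw [hf]; simp [hw]
        rw [this]
        exact hmemS.mpr ⟨hw1, hwQ⟩
      have hfinj : Set.InjOn f (T : Set α) := by
        intro x hx x' hx' hxy
        obtain ⟨_, hxP⟩ := hmemT.mp hx
        obtain ⟨_, hxP'⟩ := hmemT.mp hx'
        obtain ⟨w, hw, _, _⟩ := L1 hW hWW1 hμ hν hxP
        obtain ⟨w', hw', _, _⟩ := L1 hW hWW1 hμ hν hxP'
        have e1 : f x = w := by rw [hf]; simp [hw]
        have e2 : f x' = w' := by rw [hf]; simp [hw']
        rw [e1, e2] at hxy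
        subst hxy
        exact mu_inj ((ν.consistent x w).mpr ((ν.consistent x w).mp hw))
          ((ν.consistent x' w).mpr ((ν.consistent x' w).mp hw'))
      have hgmap : ∀ y ∈ S, g y ∈ T := by
        intro y hy
        obtain ⟨hy1, hyQ⟩ := hmemS.mp hy
        obtain ⟨m, hm, hmP⟩ := L2 hM hWW1 hμ hν hy1 hyQ
        have : g y = m := by rw [hg]; simp [hm]
        rw [this]
        exact hmemT.mpr ⟨nu_mem_left hm, hmP⟩
      have hginj : Set.InjOn g (S : Set β) := by
        intro y hy y' hy' hxy
        obtain ⟨hy1, hyQ⟩ := hmemS.mp hy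
        obtain ⟨hy1', hyQ'⟩ := hmemS.mp hy'
        obtain ⟨m, hm, _⟩ := L2 hM hWW1 hμ hν hy1 hyQ
        obtain ⟨m', hm', _⟩ := L2 hM hWW1 hμ hν hy1' hyQ'
        have e1 : g y = m := by rw [hg]; simp [hm]
        have e2 : g y' = m' := by rw [hg]; simp [hm']
        rw [e1, e2] at hxy
        subst hxy
        have c1 : μ.mu m = some y := (μ.consistent m y).mpr hm
        have c2 : μ.mu m = some y' := (μ.consistent m y').mpr hm'
        rw [c1] at c2
        exact Option.some.inj c2
      have hcard1 : T.card ≤ S.card := Finset.card_le_card_of_injOn f hfmap hfinj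
      have hcard2 : S.card ≤ T.card := Finset.card_le_card_of_injOn g hgmap hginj
      have himg1 : T.image f = S := by
        apply Finset.eq_of_subset_of_card_le
        · intro y hy
          obtain ⟨x, hx, hxy⟩ := Finset.mem_image.mp hy
          rw [← hxy]; exact hfmap x hx
        · rw [Finset.card_image_of_injOn hfinj]; exact hcard2
      have himg2 : S.image g = T := by
        apply Finset.eq_of_subset_of_card_le
        · intro x hx
          obtain ⟨y, hy, hxy⟩ := Finset.mem_image.mp hx
          rw [← hxy]; exact hgmap y hy
        · rw [Finset.card_image_of_injOn hginj]; exact hcard1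
      exact ⟨himg1, himg2⟩
    · right; exact hTne
  constructor
  · -- (a)
    intro m hP
    have hmM : m ∈ MM := by
      by_contra hm
      rw [μ.suppM m hm, ν.suppM m hm] at hP
      exact lt_irrefl _ hP
    have hmT : m ∈ T := hmemT.mpr ⟨hmM, hP⟩
    obtain ⟨w₀, hw₀, _, _⟩ := L1 hW hWW1 hμ hν hP
    rcases main m w₀ with ⟨himg1, himg2⟩ | hne
    · have : m ∈ S.image (fun y => (μ.nu y).getD m) := by rw [himg2]; exact hmT
      obtain ⟨y, hyS, hym⟩ := Finset.mem_image.mp this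
      obtain ⟨hy1, hyQ⟩ := hmemS.mp hyS
      obtain ⟨m', hm', hmP'⟩ := L2 hM hWW1 hμ hν hy1 hyQ
      have : (μ.nu y).getD m = m' := by simp [hm']
      rw [this] at hym
      subst hym
      exact ⟨y, (μ.consistent _ y).mpr hm', hy1, hyQ⟩
    · exact absurd ⟨m, hmT⟩ hne
  · -- (b)
    intro w hw1 hQ
    have hwS : w ∈ S := hmemS.mpr ⟨hw1, hQ⟩
    obtain ⟨m₀, hm₀, _⟩ := L2 hM hWW1 hμ hν hw1 hQ
    rcases main m₀ w with ⟨himg1, himg2⟩ | hne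
    · have : w ∈ T.image (fun x => (ν.mu x).getD w) := by rw [himg1]; exact hwS
      obtain ⟨x, hxT, hxw⟩ := Finset.mem_image.mp this
      obtain ⟨hxM, hxP⟩ := hmemT.mp hxT
      obtain ⟨w', hw', _, _⟩ := L1 hW hWW1 hμ hν hxP
      have : (ν.mu x).getD w = w' := by simp [hw']
      rw [this] at hxw
      subst hxw
      exact ⟨x, (ν.consistent x _).mp hw', hxP⟩
    · obtain ⟨m₁, hm₁, hP₁⟩ := L2 hM hWW1 hμ hν hw1 hQ
      exact absurd ⟨m₁, hmemT.mpr ⟨nu_mem_left hm₁, hP₁⟩⟩ hne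
  
end TwoMarkets


section Swap

variable {MM : Finset α} {WW WW1 : Finset β}
  {pM : α → Option β → ℕ} {pW : β → Option α → ℕ}
  {μ : Matching MM WW} {ν : Matching MM WW1}

/-- If `μ` is man-optimal on the big market, no man strictly prefers a matching
stable on the small market. -/
lemma manopt_empty (hM : ∀ m ∈ MM, StrictPref (pM m) WW)
    (hW : ∀ w ∈ WW, StrictPref (pW w) MM) (hWW1 : WW1 ⊆ WW)
    (hμopt : ManOpt MM WW pM pW μ) (hν : Stable MM WW1 pM pW ν) :
    ∀ m, ¬ (pM m (μ.mu m) < pM m (ν.mu m)) := by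
  have hμ : Stable MM WW pM pW μ := hμopt.1
  obtain ⟨ha, hb⟩ := surj_ab hM hW hWW1 hμ hν
  set f : α → Option β :=
    fun x => if pM x (μ.mu x) < pM x (ν.mu x) then ν.mu x else μ.mu x with hfd
  have hfpos : ∀ {x}, pM x (μ.mu x) < pM x (ν.mu x) → f x = ν.mu x :=
    fun hx => if_pos hx
  have hfneg : ∀ {x}, ¬ pM x (μ.mu x) < pM x (ν.mu x) → f x = μ.mu x :=
    fun hx => if_neg hx
  have hsupp : ∀ x ∉ MM, f x = none := by
    intro x hx
    by_cases hc : pM x (μ.mu x) < pM x (ν.mu x)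
    · rw [hfpos hc]; exact ν.suppM x hx
    · rw [hfneg hc]; exact μ.suppM x hx
  have hrange : ∀ {x w}, f x = some w → w ∈ WW := by
    intro x w h
    by_cases hx : pM x (μ.mu x) < pM x (ν.mu x)
    · rw [hfpos hx] at h; exact hWW1 (mu_mem_right h)
    · rw [hfneg hx] at h; exact mu_mem_right h
  have hinj : ∀ {x x' w}, f x = some w → f x' = some w → x = x' := by
    intro x x' w h h'
    by_cases hx : pM x (μ.mu x) < pM x (ν.mu x)
    · rw [hfpos hx] at h
      by_cases hx' : pM x' (μ.mu x') < pM x' (ν.mu x')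
      · rw [hfpos hx'] at h'; exact mu_inj h h'
      · exfalso
        rw [hfneg hx'] at h'
        obtain ⟨w'', e, hw1, hQ⟩ := L1 hW hWW1 hμ hν hx
        rw [h] at e
        obtain rfl : w = w'' := Option.some.inj e
        obtain ⟨m₁, hm₁, hP₁⟩ := L2 hM hWW1 hμ hν hw1 hQ
        rw [(μ.consistent x' w).mp h'] at hm₁
        obtain rfl : x' = m₁ := Option.some.inj hm₁
        exact hx' hP₁
    · rw [hfneg hx] at h
      by_cases hx' : pM x' (μ.mu x') < pM x' (ν.mu x')
      · exfalso
        rw [hfpos hx'] at h'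
        obtain ⟨w'', e, hw1, hQ⟩ := L1 hW hWW1 hμ hν hx'
        rw [h'] at e
        obtain rfl : w = w'' := Option.some.inj e
        obtain ⟨m₁, hm₁, hP₁⟩ := L2 hM hWW1 hμ hν hw1 hQ
        rw [(μ.consistent x w).mp h] at hm₁
        obtain rfl : x = m₁ := Option.some.inj hm₁
        exact hx hP₁
      · rw [hfneg hx'] at h'; exact mu_inj h h'
  set lam : Matching MM WW := Matching.mk' MM WW f hsupp hrange hinj with hlam
  have hlmu : ∀ x, lam.mu x = f x := fun x => rfl
  -- characterization of lam.nu
  have charS : ∀ w, w ∈ WW1 → pW w (ν.nu w) < pW w (μ.nu w) → lam.nu w = ν.nu w := by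
    intro w hw1 hQ
    obtain ⟨m₁, hm₁, hP₁⟩ := hb w hw1 hQ
    have hfm : lam.mu m₁ = some w := by
      rw [hlmu, hfpos hP₁]
      exact (ν.consistent m₁ w).mpr hm₁
    rw [hm₁]
    exact (lam.consistent m₁ w).mp hfm
  have charN : ∀ w, ¬ (w ∈ WW1 ∧ pW w (ν.nu w) < pW w (μ.nu w)) →
      lam.nu w = μ.nu w := by
    intro w hS
    cases hc : μ.nu w with
    | some m' =>
        by_cases hP' : pM m' (μ.mu m') < pM m' (ν.mu m')
        · exfalso
          obtain ⟨w'', e, hw1, hQ⟩ := ha m' hP'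
          rw [(μ.consistent m' w).mpr hc] at e
          obtain rfl : w = w'' := Option.some.inj e
          exact hS ⟨hw1, hQ⟩
        · have hfm : lam.mu m' = some w := by
            rw [hlmu, hfneg hP']
            exact (μ.consistent m' w).mpr hc
          exact (lam.consistent m' w).mp hfm
    | none =>
        rw [nu_eq_none_iff]
        intro x hxw
        rw [hlmu] at hxw
        by_cases hx : pM x (μ.mu x) < pM x (ν.mu x)
        · rw [hfpos hx] at hxw
          obtain ⟨w'', e, hw1, hQ⟩ := L1 hW hWW1 hμ hν hx
          rw [hxw] at e
          obtain rfl : w = w'' := Option.some.inj e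
          exact hS ⟨hw1, hQ⟩
        · rw [hfneg hx] at hxw
          rw [(μ.consistent x w).mp hxw] at hc
          exact nomatch hc
  -- lam is stable in the big market
  have hstab : Stable MM WW pM pW lam := by
    refine ⟨⟨?_, ?_⟩, ?_⟩
    · intro x hxM w hxw
      rw [hlmu] at hxw
      by_cases hx : pM x (μ.mu x) < pM x (ν.mu x)
      · rw [hfpos hx] at hxw; exact hν.1.1 x hxM w hxw
      · rw [hfneg hx] at hxw; exact hμ.1.1 x hxM w hxw
    · intro w hwW m hm
      by_cases hS : w ∈ WW1 ∧ pW w (ν.nu w) < pW w (μ.nu w)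
      · rw [charS w hS.1 hS.2] at hm
        exact hν.1.2 w hS.1 m hm
      · rw [charN w hS] at hm
        exact hμ.1.2 w hwW m hm
    · rintro x w ⟨hxM, hwW, h1, h2⟩
      have h1f : pM x (f x) < pM x (some w) := h1
      have hge : pM x (μ.mu x) ≤ pM x (f x) := by
        by_cases hx : pM x (μ.mu x) < pM x (ν.mu x)
        · rw [hfpos hx]; exact hx.le
        · rw [hfneg hx]
      have h1' : pM x (μ.mu x) < pM x (some w) := lt_of_le_of_lt hge h1f
      have hstr := block_strictW hμ (hW w hwW) hxM hwW h1'
      by_cases hS : w ∈ WW1 ∧ pW w (ν.nu w) < pW w (μ.nu w)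
      · rw [charS w hS.1 hS.2] at h2
        have h3 := block_strictM hν ((hM x hxM).mono hWW1) hxM hS.1 h2
        by_cases hx : pM x (μ.mu x) < pM x (ν.mu x)
        · rw [hfpos hx] at h1f
          exact lt_asymm h3 h1f
        · exact lt_irrefl _ ((h3.trans_le (not_lt.mp hx)).trans h1')
      · rw [charN w hS] at h2
        exact lt_asymm h2 hstr
  -- conclude from man-optimality
  intro m hP
  have hmM : m ∈ MM := by
    by_contra hm
    rw [μ.suppM m hm, ν.suppM m hm] at hP
    exact lt_irrefl _ hP
  have hle := hμopt.2 lam hstab m hmM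
  rw [hlmu, hfpos hP] at hle
  exact absurd hP (not_lt.mpr hle)

/-- If `ν` is woman-optimal on the small market, no woman in `WW1` strictly prefers a
matching stable on the big market. -/
lemma womanopt_empty (hM : ∀ m ∈ MM, StrictPref (pM m) WW)
    (hW : ∀ w ∈ WW, StrictPref (pW w) MM) (hWW1 : WW1 ⊆ WW)
    (hμ : Stable MM WW pM pW μ) (hνopt : WomanOpt MM WW1 pM pW ν) :
    ∀ w ∈ WW1, ¬ (pW w (ν.nu w) < pW w (μ.nu w)) := by
  have hν : Stable MM WW1 pM pW ν := hνopt.1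
  obtain ⟨ha, hb⟩ := surj_ab hM hW hWW1 hμ hν
  set f : α → Option β :=
    fun x => if pM x (μ.mu x) < pM x (ν.mu x) then μ.mu x else ν.mu x with hfd
  have hfpos : ∀ {x}, pM x (μ.mu x) < pM x (ν.mu x) → f x = μ.mu x :=
    fun hx => if_pos hx
  have hfneg : ∀ {x}, ¬ pM x (μ.mu x) < pM x (ν.mu x) → f x = ν.mu x :=
    fun hx => if_neg hx
  have hsupp : ∀ x ∉ MM, f x = none := by
    intro x hx
    by_cases hc : pM x (μ.mu x) < pM x (ν.mu x)
    · rw [hfpos hc]; exact μ.suppM x hx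
    · rw [hfneg hc]; exact ν.suppM x hx
  have hrange : ∀ {x w}, f x = some w → w ∈ WW1 := by
    intro x w h
    by_cases hx : pM x (μ.mu x) < pM x (ν.mu x)
    · rw [hfpos hx] at h
      obtain ⟨w'', e, hw1, hQ⟩ := ha x hx
      rw [h] at e
      obtain rfl : w = w'' := Option.some.inj e
      exact hw1
    · rw [hfneg hx] at h; exact mu_mem_right h
  have hinj : ∀ {x x' w}, f x = some w → f x' = some w → x = x' := by
    intro x x' w h h'
    by_cases hx : pM x (μ.mu x) < pM x (ν.mu x)
    · rw [hfpos hx] at h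
      by_cases hx' : pM x' (μ.mu x') < pM x' (ν.mu x')
      · rw [hfpos hx'] at h'; exact mu_inj h h'
      · exfalso
        rw [hfneg hx'] at h'
        obtain ⟨w'', e, hw1, hQ⟩ := ha x hx
        rw [h] at e
        obtain rfl : w = w'' := Option.some.inj e
        obtain ⟨m₁, hm₁, hP₁⟩ := hb w hw1 hQ
        rw [(ν.consistent x' w).mp h'] at hm₁
        obtain rfl : x' = m₁ := Option.some.inj hm₁
        exact hx' hP₁
    · rw [hfneg hx] at h
      by_cases hx' : pM x' (μ.mu x') < pM x' (ν.mu x')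
      · exfalso
        rw [hfpos hx'] at h'
        obtain ⟨w'', e, hw1, hQ⟩ := ha x' hx'
        rw [h'] at e
        obtain rfl : w = w'' := Option.some.inj e
        obtain ⟨m₁, hm₁, hP₁⟩ := hb w hw1 hQ
        rw [(ν.consistent x w).mp h] at hm₁
        obtain rfl : x = m₁ := Option.some.inj hm₁
        exact hx hP₁
      · rw [hfneg hx'] at h'; exact mu_inj h h'
  set lam : Matching MM WW1 := Matching.mk' MM WW1 f hsupp hrange hinj with hlam
  have hlmu : ∀ x, lam.mu x = f x := fun x => rfl
  have charS : ∀ w, w ∈ WW1 → pW w (ν.nu w) < pW w (μ.nu w) → lam.nu w = μ.nu w := by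
    intro w hw1 hQ
    obtain ⟨m₁, hm₁, hP₁⟩ := L2 hM hWW1 hμ hν hw1 hQ
    have hfm : lam.mu m₁ = some w := by
      rw [hlmu, hfpos hP₁]
      exact (μ.consistent m₁ w).mpr hm₁
    rw [hm₁]
    exact (lam.consistent m₁ w).mp hfm
  have charN : ∀ w, ¬ (w ∈ WW1 ∧ pW w (ν.nu w) < pW w (μ.nu w)) →
      lam.nu w = ν.nu w := by
    intro w hS
    cases hc : ν.nu w with
    | some m' =>
        by_cases hP' : pM m' (μ.mu m') < pM m' (ν.mu m')
        · exfalso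
          obtain ⟨w'', e, hw1, hQ⟩ := L1 hW hWW1 hμ hν hP'
          rw [(ν.consistent m' w).mpr hc] at e
          obtain rfl : w = w'' := Option.some.inj e
          exact hS ⟨hw1, hQ⟩
        · have hfm : lam.mu m' = some w := by
            rw [hlmu, hfneg hP']
            exact (ν.consistent m' w).mpr hc
          exact (lam.consistent m' w).mp hfm
    | none =>
        rw [nu_eq_none_iff]
        intro x hxw
        rw [hlmu] at hxw
        by_cases hx : pM x (μ.mu x) < pM x (ν.mu x)
        · rw [hfpos hx] at hxw
          obtain ⟨w'', e, hw1, hQ⟩ := ha x hx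
          rw [hxw] at e
          obtain rfl : w = w'' := Option.some.inj e
          exact hS ⟨hw1, hQ⟩
        · rw [hfneg hx] at hxw
          rw [(ν.consistent x w).mp hxw] at hc
          exact nomatch hc
  have hstab : Stable MM WW1 pM pW lam := by
    refine ⟨⟨?_, ?_⟩, ?_⟩
    · intro x hxM w hxw
      rw [hlmu] at hxw
      by_cases hx : pM x (μ.mu x) < pM x (ν.mu x)
      · rw [hfpos hx] at hxw; exact hμ.1.1 x hxM w hxw
      · rw [hfneg hx] at hxw; exact hν.1.1 x hxM w hxw
    · intro w hw1 m hm
      by_cases hS : w ∈ WW1 ∧ pW w (ν.nu w) < pW w (μ.nu w)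
      · rw [charS w hS.1 hS.2] at hm
        exact hμ.1.2 w (hWW1 hw1) m hm
      · rw [charN w hS] at hm
        exact hν.1.2 w hw1 m hm
    · rintro x w ⟨hxM, hw1, h1, h2⟩
      have h1f : pM x (f x) < pM x (some w) := h1
      have hge : pW w (ν.nu w) ≤ pW w (lam.nu w) := by
        by_cases hS : w ∈ WW1 ∧ pW w (ν.nu w) < pW w (μ.nu w)
        · rw [charS w hS.1 hS.2]; exact hS.2.le
        · rw [charN w hS]
      have h2' : pW w (ν.nu w) < pW w (some x) := lt_of_le_of_lt hge h2
      have h3 := block_strictM hν ((hM x hxM).mono hWW1) hxM hw1 h2'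
      by_cases hx : pM x (μ.mu x) < pM x (ν.mu x)
      · rw [hfpos hx] at h1f
        have h4 := block_strictW hμ (hW w (hWW1 hw1)) hxM (hWW1 hw1) h1f
        by_cases hQ : pW w (ν.nu w) < pW w (μ.nu w)
        · rw [charS w hw1 hQ] at h2
          exact lt_asymm h2 h4
        · exact lt_irrefl _ ((h4.trans_le (not_lt.mp hQ)).trans h2')
      · rw [hfneg hx] at h1f
        exact lt_asymm h3 h1f
  intro w hw1 hQ
  have hle := hνopt.2 lam hstab w hw1
  rw [charS w hw1 hQ] at hle
  exact absurd hQ (not_lt.mpr hle)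

end Swap

end AuxProof


/-- Removing women from the market: if `μ` is the σ-optimal stable
matching on `(M, W)` and `μ₂` the σ-optimal stable matching on the restricted market
`(M, W₁)` (for the same fixed side σ ∈ {men, women}), then every man is weakly worse
off in `μ₂` and every remaining woman weakly better off. -/
theorem remove_women_effect
    (hM : ∀ m ∈ M, StrictPref (prefM m) W) (hW : ∀ w ∈ W, StrictPref (prefW w) M)
    (W₁ : Finset β) (hW₁ : W₁ ⊆ W)
    (μ : Matching M W) (μ₂ : Matching M W₁)
    (hopt :
      (ManOpt M W prefM prefW μ ∧ ManOpt M W₁ prefM prefW μ₂) ∨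
      (WomanOpt M W prefM prefW μ ∧ WomanOpt M W₁ prefM prefW μ₂)) :
    (∀ m ∈ M, prefM m (μ₂.mu m) ≤ prefM m (μ.mu m)) ∧
    (∀ w ∈ W₁, prefW w (μ.nu w) ≤ prefW w (μ₂.nu w)) := by
  rcases hopt with ⟨h1, h2⟩ | ⟨h1, h2⟩
  · -- man-optimal case
    have hTe := manopt_empty hM hW hW₁ h1 h2.1
    constructor
    · intro m _
      exact le_of_not_gt (hTe m)
    · intro w hw1
      by_contra hle
      obtain ⟨m, _, hP⟩ := L2 hM hW₁ h1.1 h2.1 hw1 (lt_of_not_ge hle)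
      exact hTe m hP
  · -- woman-optimal case
    have hSe := womanopt_empty hM hW hW₁ h1.1 h2
    constructor
    · intro m _
      by_contra hlt
      obtain ⟨w, _, hw1, hQ⟩ := L1 hW hW₁ h1.1 h2.1 (lt_of_not_ge hlt)
      exact hSe w hw1 hQ
    · intro w hw1
      exact le_of_not_gt (hSe w hw1)

end Stmt2
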